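/- (Theorem 1) A weak order ρ solves the weak quadratic assignment problem maximize ∑_i ∑_j r_{ij}(ρ(i) - ρ(j)) over all weak orders on X if and only if for all i, j, t_i > t_j implies ρ(i) > ρ(j), where t_i = ∑_j (r_{ij} - r_{ji}). -/
import Mathlib


/-- The Copeland index of alternative `i` in a binary relation `r` on `Fin n`. -/
noncomputable def copeland {n : ℕ} (r : Fin n → Fin n → Prop) (i : Fin n) : ℤ :=
  (({j | r i j} : Set (Fin n)).ncard : ℤ) - (({j | r j i} : Set (Fin n)).ncard : ℤ)

/-- A weak order: a complete and transitive binary relation. -/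
def IsWeakOrder {n : ℕ} (r : Fin n → Fin n → Prop) : Prop :=
  (∀ i j, r i j ∨ r j i) ∧ Transitive r

open Classical in
lemma copeland_def' {n : ℕ} (s : Fin n → Fin n → Prop) (i : Fin n) :
    copeland s i = ((Finset.univ.filter (fun k => s i k)).card : ℤ)
      - ((Finset.univ.filter (fun k => s k i)).card : ℤ) := by
  have h : ∀ p : Fin n → Prop, ({j | p j} : Set (Fin n)) = ↑(Finset.univ.filter p) := by
    intro p; ext x; simp
  rw [copeland, h, h, Set.ncard_coe_finset, Set.ncard_coe_finset]

lemma copeland_lt_of_strict {n : ℕ} {s : Fin n → Fin n → Prop} (hs : IsWeakOrder s)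
    {i j : Fin n} (hij : s i j) (hji : ¬ s j i) : copeland s j < copeland s i := by
  classical
  have hA : Finset.univ.filter (fun k => s j k) ⊂ Finset.univ.filter (fun k => s i k) := by
    constructor
    · intro k hk
      simp only [Finset.mem_filter, Finset.mem_univ, true_and] at *
      exact hs.2 hij hk
    · intro h
      have : s j i := by
        have := h (by simp [Finset.mem_filter, (hs.1 i i).elim id id] :
          i ∈ Finset.univ.filter (fun k => s i k))
        simpa using this
      exact hji this
  have hB : Finset.univ.filter (fun k => s k i) ⊆ Finset.univ.filter (fun k => s k j) := by
    intro k hk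
    simp only [Finset.mem_filter, Finset.mem_univ, true_and] at *
    exact hs.2 hk hij
  have h1 := Finset.card_lt_card hA
  have h2 := Finset.card_le_card hB
  rw [copeland_def', copeland_def']
  omega

lemma copeland_eq_of_tie {n : ℕ} {s : Fin n → Fin n → Prop} (hs : IsWeakOrder s)
    {i j : Fin n} (hij : s i j) (hji : s j i) : copeland s i = copeland s j := by
  classical
  have hA : Finset.univ.filter (fun k => s i k) = Finset.univ.filter (fun k => s j k) := by
    ext k; simp only [Finset.mem_filter, Finset.mem_univ, true_and]
    exact ⟨fun h => hs.2 hji h, fun h => hs.2 hij h⟩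
  have hB : Finset.univ.filter (fun k => s k i) = Finset.univ.filter (fun k => s k j) := by
    ext k; simp only [Finset.mem_filter, Finset.mem_univ, true_and]
    exact ⟨fun h => hs.2 h hij, fun h => hs.2 h hji⟩
  rw [copeland_def', copeland_def', hA, hB]

lemma strict_of_copeland_lt {n : ℕ} {s : Fin n → Fin n → Prop} (hs : IsWeakOrder s)
    {i j : Fin n} (h : copeland s j < copeland s i) : s i j ∧ ¬ s j i := by
  by_cases hij : s i j
  · refine ⟨hij, fun hji => ?_⟩
    exact absurd (copeland_eq_of_tie hs hij hji) (by omega)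
  · have hji : s j i := (hs.1 i j).resolve_left hij
    exact absurd (copeland_lt_of_strict hs hji hij) (by omega)

open Classical in
lemma ncard_eq_sum' {n : ℕ} (p : Fin n → Prop) :
    (({j | p j} : Set (Fin n)).ncard : ℤ) = ∑ j, if p j then (1:ℤ) else 0 := by
  have h : ({j | p j} : Set (Fin n)) = ↑(Finset.univ.filter p) := by ext x; simp
  rw [h, Set.ncard_coe_finset, Finset.card_filter]
  push_cast
  rfl

open Classical in
lemma copeland_eq_sum {n : ℕ} (s : Fin n → Fin n → Prop) (i : Fin n) :
    ((copeland s i : ℝ)) = ∑ j, ((if s i j then (1:ℝ) else 0) - (if s j i then 1 else 0)) := by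
  have := ncard_eq_sum' (fun j => s i j)
  have := ncard_eq_sum' (fun j => s j i)
  rw [copeland]
  push_cast [ncard_eq_sum']
  rw [Finset.sum_sub_distrib]

open Classical in
noncomputable def Dterm {n : ℕ} (R : Fin n → Fin n → ℝ) (s : Fin n → Fin n → Prop)
    (i j : Fin n) : ℝ :=
  ((∑ k, (R i k - R k i)) - (∑ k, (R j k - R k j))) *
    ((if s i j then (1:ℝ) else 0) - (if s j i then 1 else 0))

open Classical in
lemma Feq {n : ℕ} (R : Fin n → Fin n → ℝ) (s : Fin n → Fin n → Prop) :
    ∑ i, ∑ j, R i j * ((copeland s i : ℝ) - (copeland s j : ℝ))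
      = (∑ i, ∑ j, Dterm R s i j) / 2 := by
  set T : Fin n → ℝ := fun i => ∑ k, (R i k - R k i) with hT
  set e : Fin n → Fin n → ℝ := fun i j => if s i j then 1 else 0 with he
  have hswap : ∀ g : Fin n → Fin n → ℝ, ∑ i, ∑ j, g i j = ∑ i, ∑ j, g j i := by
    intro g; rw [Finset.sum_comm]
  have key : ∀ f : Fin n → ℝ,
      ∑ i, ∑ j, R i j * (f i - f j) = ∑ i, T i * f i := by
    intro f
    calc ∑ i, ∑ j, R i j * (f i - f j)
        = (∑ i, ∑ j, R i j * f i) - ∑ i, ∑ j, R i j * f j := by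
          simp only [mul_sub, Finset.sum_sub_distrib]
      _ = (∑ i, ∑ j, R i j * f i) - ∑ i, ∑ j, R j i * f i := by
          rw [hswap (fun i j => R i j * f j)]
      _ = ∑ i, ∑ j, (R i j * f i - R j i * f i) := by
          simp only [Finset.sum_sub_distrib]
      _ = ∑ i, T i * f i := by
          refine Finset.sum_congr rfl fun a _ => ?_
          simp only [hT, Finset.sum_mul, sub_mul]
  have hG : ∑ i, T i * ((copeland s i : ℝ)) = ∑ i, ∑ j, (T i - T j) * e i j := by
    simp only [copeland_eq_sum, Finset.mul_sum, mul_sub, sub_mul,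
      Finset.sum_sub_distrib, ← he]
    congr 1
    rw [hswap (fun i j => T i * e j i)]
  have hsym : ∑ i, ∑ j, (T i - T j) * e i j = (∑ i, ∑ j, Dterm R s i j) / 2 := by
    have h2 : ∑ i, ∑ j, Dterm R s i j
        = ∑ i, ∑ j, ((T i - T j) * e i j - (T i - T j) * e j i) := by
      refine Finset.sum_congr rfl fun a _ => Finset.sum_congr rfl fun b _ => ?_
      simp only [Dterm, he, hT]; ring
    have h3 : ∑ i, ∑ j, (T i - T j) * e j i = - ∑ i, ∑ j, (T i - T j) * e i j := by
      rw [hswap (fun i j => (T i - T j) * e j i), ← Finset.sum_neg_distrib]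
      simp only [← Finset.sum_neg_distrib]
      refine Finset.sum_congr rfl fun a _ => Finset.sum_congr rfl fun b _ => by ring
    rw [h2]
    simp only [Finset.sum_sub_distrib]
    rw [h3]
    ring
  rw [key, hG, hsym]

open Classical in
lemma Dterm_le {n : ℕ} (R : Fin n → Fin n → ℝ) (s : Fin n → Fin n → Prop) (i j : Fin n) :
    Dterm R s i j ≤ |(∑ k, (R i k - R k i)) - (∑ k, (R j k - R k j))| := by
  have hd : |(if s i j then (1:ℝ) else 0) - (if s j i then 1 else 0)| ≤ 1 := by
    by_cases h1 : s i j <;> by_cases h2 : s j i <;> simp [h1, h2]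
  rw [Dterm]
  calc ((∑ k, (R i k - R k i)) - (∑ k, (R j k - R k j))) *
        ((if s i j then (1:ℝ) else 0) - (if s j i then 1 else 0))
      ≤ |((∑ k, (R i k - R k i)) - (∑ k, (R j k - R k j))) *
        ((if s i j then (1:ℝ) else 0) - (if s j i then 1 else 0))| := le_abs_self _
    _ = |(∑ k, (R i k - R k i)) - (∑ k, (R j k - R k j))| *
        |(if s i j then (1:ℝ) else 0) - (if s j i then 1 else 0)| := abs_mul _ _
    _ ≤ |(∑ k, (R i k - R k i)) - (∑ k, (R j k - R k j))| * 1 :=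
        mul_le_mul_of_nonneg_left hd (abs_nonneg _)
    _ = _ := mul_one _

open Classical in
lemma Dterm_eq {n : ℕ} (R : Fin n → Fin n → ℝ) (s : Fin n → Fin n → Prop)
    (hcond : ∀ a b : Fin n, (∑ k, (R a k - R k a)) > (∑ k, (R b k - R k b)) → s a b ∧ ¬ s b a)
    (i j : Fin n) :
    Dterm R s i j = |(∑ k, (R i k - R k i)) - (∑ k, (R j k - R k j))| := by
  rcases lt_trichotomy (∑ k, (R i k - R k i)) (∑ k, (R j k - R k j)) with h | h | h
  · obtain ⟨h1, h2⟩ := hcond j i h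
    rw [Dterm, if_neg h2, if_pos h1, abs_of_neg (by linarith)]
    ring
  · rw [Dterm, h, sub_self, zero_mul]; simp
  · obtain ⟨h1, h2⟩ := hcond i j h
    rw [Dterm, if_pos h1, if_neg h2, abs_of_pos (by linarith)]
    ring

open Classical in
lemma strict_of_Dterm_eq {n : ℕ} (R : Fin n → Fin n → ℝ) (s : Fin n → Fin n → Prop)
    {i j : Fin n}
    (heq : Dterm R s i j = |(∑ k, (R i k - R k i)) - (∑ k, (R j k - R k j))|)
    (h : (∑ k, (R i k - R k i)) > (∑ k, (R j k - R k j))) : s i j ∧ ¬ s j i := by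
  rw [Dterm, abs_of_pos (by linarith)] at heq
  by_cases h1 : s i j <;> by_cases h2 : s j i <;>
    simp only [h1, h2, if_pos, if_neg, if_true, if_false] at heq <;>
    first
      | exact ⟨h1, h2⟩
      | (exfalso; rw [if_pos h1] at heq; rw [if_pos h2] at heq; linarith)
      | (exfalso; nlinarith [heq])
      | (exfalso; linarith)

/-- Theorem 1: a weak order solves the weak quadratic assignment problem
`maximize ∑ i ∑ j r_{ij}(ρ(i) - ρ(j))` iff `tᵢ > tⱼ` implies `ρ(i) > ρ(j)`,
where `tᵢ = ∑ j (r_{ij} - r_{ji})`. -/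
theorem stmt3 (n : ℕ) (R : Fin n → Fin n → ℝ) (r : Fin n → Fin n → Prop)
    (hr : IsWeakOrder r) :
    (∀ s : Fin n → Fin n → Prop, IsWeakOrder s →
        ∑ i, ∑ j, R i j * ((copeland s i : ℝ) - (copeland s j : ℝ)) ≤
          ∑ i, ∑ j, R i j * ((copeland r i : ℝ) - (copeland r j : ℝ))) ↔
    (∀ i j, (∑ k, (R i k - R k i)) > (∑ k, (R j k - R k j)) →
        copeland r i > copeland r j) := by
  classical
  have hle : ∀ s : Fin n → Fin n → Prop,
      (∑ i, ∑ j, Dterm R s i j) ≤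
        ∑ i, ∑ j, |(∑ k, (R i k - R k i)) - (∑ k, (R j k - R k j))| :=
    fun s => Finset.sum_le_sum fun a _ => Finset.sum_le_sum fun b _ => Dterm_le R s a b
  constructor
  · intro hmax i j hT
    -- the total preorder ordering by Copeland scores
    set s0 : Fin n → Fin n → Prop :=
      fun a b => (∑ k, (R b k - R k b)) ≤ (∑ k, (R a k - R k a)) with hs0def
    have hs0 : IsWeakOrder s0 :=
      ⟨fun a b => le_total _ _, fun a b c hab hbc => le_trans hbc hab⟩
    have hcond0 : ∀ a b : Fin n,
        (∑ k, (R a k - R k a)) > (∑ k, (R b k - R k b)) → s0 a b ∧ ¬ s0 b a :=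
      fun a b h => ⟨le_of_lt h, not_le.mpr h⟩
    have hM0 : ∑ a, ∑ b, Dterm R s0 a b =
        ∑ a, ∑ b, |(∑ k, (R a k - R k a)) - (∑ k, (R b k - R k b))| :=
      Finset.sum_congr rfl fun a _ => Finset.sum_congr rfl fun b _ => Dterm_eq R s0 hcond0 a b
    have h1 := hmax s0 hs0
    rw [Feq, Feq] at h1
    have h2 : ∑ a, ∑ b, Dterm R r a b =
        ∑ a, ∑ b, |(∑ k, (R a k - R k a)) - (∑ k, (R b k - R k b))| := by
      refine le_antisymm (hle r) ?_
      rw [← hM0]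
      linarith
    have hpt : ∀ a b : Fin n, Dterm R r a b =
        |(∑ k, (R a k - R k a)) - (∑ k, (R b k - R k b))| := by
      intro a b
      have houter := (Finset.sum_eq_sum_iff_of_le
        (fun a _ => Finset.sum_le_sum fun b _ => Dterm_le R r a b)).mp h2 a (Finset.mem_univ a)
      exact (Finset.sum_eq_sum_iff_of_le
        (fun b _ => Dterm_le R r a b)).mp houter b (Finset.mem_univ b)
    obtain ⟨hij, hji⟩ := strict_of_Dterm_eq R r (hpt i j) hT
    exact copeland_lt_of_strict hr hij hji
  · intro hcop s hs
    have hcond : ∀ a b : Fin n,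
        (∑ k, (R a k - R k a)) > (∑ k, (R b k - R k b)) → r a b ∧ ¬ r b a :=
      fun a b h => strict_of_copeland_lt hr (hcop a b h)
    have hMr : ∑ a, ∑ b, Dterm R r a b =
        ∑ a, ∑ b, |(∑ k, (R a k - R k a)) - (∑ k, (R b k - R k b))| :=
      Finset.sum_congr rfl fun a _ => Finset.sum_congr rfl fun b _ => Dterm_eq R r hcond a b
    rw [Feq, Feq]
    have := hle s
    rw [hMr]
    linarith [hle s, hMr ▸ le_refl (∑ a, ∑ b, Dterm R r a b)]
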